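/- For any left partial group action α: G ↷ M on a K-module M, the G-module KG ⊗_{G_par} M together with the G-equivariant map ι: m ↦ 1 ⊗_{G_par} m is the universal global action of α: for any G-module X and G-equivariant map ψ: M → X there is a unique G-module map ψ̃: KG ⊗_{G_par} M → X with ψ̃ ∘ ι = ψ. -/
import Mathlib


/-- The defining relations of Exel's semigroup `S(G)` of a group `G`:
`[1] = 1`, `[s⁻¹][s][t] = [s⁻¹][st]`, `[s][t][t⁻¹] = [st][t⁻¹]`. -/
inductive ExelRel (G : Type*) [Group G] : FreeMonoid G → FreeMonoid G → Prop
  | one : ExelRel G (FreeMonoid.of 1) 1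
  | left (s t : G) : ExelRel G
      (FreeMonoid.of s⁻¹ * FreeMonoid.of s * FreeMonoid.of t)
      (FreeMonoid.of s⁻¹ * FreeMonoid.of (s * t))
  | right (s t : G) : ExelRel G
      (FreeMonoid.of s * FreeMonoid.of t * FreeMonoid.of t⁻¹)
      (FreeMonoid.of (s * t) * FreeMonoid.of t⁻¹)

/-- The congruence on the free monoid on `G` generated by the Exel relations. -/
def ExelCon (G : Type*) [Group G] : Con (FreeMonoid G) := conGen (ExelRel G)

/-- Exel's semigroup (an inverse monoid) `S(G)` of the group `G`. -/
abbrev ExelMonoid (G : Type*) [Group G] := (ExelCon G).Quotient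

/-- The canonical generator `[g]` of `S(G)`. -/
def ExelMonoid.of {G : Type*} [Group G] (g : G) : ExelMonoid G :=
  (ExelCon G).mk' (FreeMonoid.of g)

/-- The idempotent `e_g := [g][g⁻¹]` in `S(G)`. -/
def ExelMonoid.e {G : Type*} [Group G] (g : G) : ExelMonoid G :=
  ExelMonoid.of g * ExelMonoid.of g⁻¹

/-- The partial group algebra `K_par G`: the semigroup `K`-algebra of Exel's semigroup. -/
abbrev KparG (K G : Type*) [CommRing K] [Group G] := MonoidAlgebra K (ExelMonoid G)

/-- The canonical generator `[g]` of `K_par G`. -/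
noncomputable def pr (K : Type*) {G : Type*} [CommRing K] [Group G] (g : G) : KparG K G :=
  MonoidAlgebra.of K (ExelMonoid G) (ExelMonoid.of g)

/-- The idempotent `e_g := [g][g⁻¹]` in `K_par G`. -/
noncomputable def eK (K : Type*) {G : Type*} [CommRing K] [Group G] (g : G) : KparG K G :=
  pr K g * pr K g⁻¹

/-- A left partial group action of `G` on a `K`-module `M`: submodules `M_g = D g` and
`K`-linear maps `θ g` restricting to isomorphisms `M_{g⁻¹} → M_g`, with `M_1 = M`,
`θ_1 = id`, `θ_g(M_{g⁻¹} ∩ M_{g⁻¹h}) ⊆ M_g ∩ M_h` and `θ_g θ_h = θ_{gh}` on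
`M_{h⁻¹} ∩ M_{h⁻¹g⁻¹}`. -/
def IsLeftPA (K : Type*) {G M : Type*} [CommRing K] [Group G] [AddCommGroup M]
    [Module K M] (D : G → Submodule K M) (θ : G → M →ₗ[K] M) : Prop :=
  D 1 = ⊤ ∧ θ 1 = LinearMap.id ∧
    (∀ g : G, ∀ m ∈ D g⁻¹, θ g m ∈ D g) ∧
    (∀ g : G, ∀ m ∈ D g⁻¹, θ g⁻¹ (θ g m) = m) ∧
    (∀ g : G, ∀ y ∈ D g, ∃ m ∈ D g⁻¹, θ g m = y) ∧
    (∀ g h : G, ∀ m ∈ D g⁻¹ ⊓ D (g⁻¹ * h), θ g m ∈ D g ⊓ D h) ∧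
    (∀ g h : G, ∀ m ∈ D h⁻¹ ⊓ D (h⁻¹ * g⁻¹), θ g (θ h m) = θ (g * h) m)

/-- A right partial group action of `G` on a `K`-module `M` (a left partial action of
`Gᵒᵖ`): `(M_h ∩ M_{g⁻¹})β_g ⊆ M_{hg} ∩ M_g` and `(m)β_g β_h = (m)β_{gh}` on
`M_{h⁻¹g⁻¹} ∩ M_{g⁻¹}`. -/
def IsRightPA (K : Type*) {G M : Type*} [CommRing K] [Group G] [AddCommGroup M]
    [Module K M] (D : G → Submodule K M) (β : G → M →ₗ[K] M) : Prop :=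
  D 1 = ⊤ ∧ β 1 = LinearMap.id ∧
    (∀ g : G, ∀ m ∈ D g⁻¹, β g m ∈ D g) ∧
    (∀ g : G, ∀ m ∈ D g⁻¹, β g⁻¹ (β g m) = m) ∧
    (∀ g : G, ∀ y ∈ D g, ∃ m ∈ D g⁻¹, β g m = y) ∧
    (∀ g h : G, ∀ m ∈ D h ⊓ D g⁻¹, β g m ∈ D (h * g) ⊓ D g) ∧
    (∀ g h : G, ∀ m ∈ D (h⁻¹ * g⁻¹) ⊓ D g⁻¹, β h (β g m) = β (g * h) m)

open TensorProduct

/-- The group algebra `KG`. -/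
abbrev KG (K G : Type*) [CommRing K] [Group G] := MonoidAlgebra K G

/-- The relation `KG`-submodule of `KG ⊗[K] M` defining `KG ⊗_{G_par} M` for a partial
action `(D, θ)` of `G` on the `K`-module `M`. -/
noncomputable def globRel (K : Type*) {G M : Type*} [CommRing K] [Group G]
    [AddCommGroup M] [Module K M] (D : G → Submodule K M) (θ : G → M →ₗ[K] M) :
    Submodule (KG K G) (KG K G ⊗[K] M) :=
  Submodule.span (KG K G) {w : KG K G ⊗[K] M | ∃ (g h : G) (m : M), m ∈ D h⁻¹ ∧
    w = MonoidAlgebra.of K G g ⊗ₜ[K] θ h m - MonoidAlgebra.of K G (g * h) ⊗ₜ[K] m}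

/-- `KG ⊗_{G_par} M`, the universal global action of the partial action `(D, θ)`. -/
noncomputable abbrev GlobPA (K : Type*) {G M : Type*} [CommRing K] [Group G]
    [AddCommGroup M] [Module K M] (D : G → Submodule K M) (θ : G → M →ₗ[K] M) :=
  KG K G ⊗[K] M ⧸ globRel K D θ

/-- For any partial action `α = (D, θ) : G ↷ M` on a `K`-module `M`, the `G`-module
`KG ⊗_{G_par} M` together with the `G`-equivariant map `ι : m ↦ 1 ⊗ m` is the universal
global action of `α`: every `G`-equivariant map `ψ` from `M` to a `G`-module `X` factors
uniquely through `ι` via a map of `G`-modules. -/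
theorem glob_universal_property (K : Type*) {G M : Type*} [CommRing K] [Group G]
    [AddCommGroup M] [Module K M] (D : G → Submodule K M) (θ : G → M →ₗ[K] M)
    (hα : IsLeftPA K D θ) :
    let ι : M → GlobPA K D θ :=
      fun m => Submodule.Quotient.mk ((1 : KG K G) ⊗ₜ[K] m)
    (∀ g : G, ∀ m ∈ D g⁻¹, ι (θ g m) = MonoidAlgebra.of K G g • ι m) ∧
      ∀ (X : Type*) [AddCommGroup X] [Module K X] [Module (KG K G) X]
        [IsScalarTower K (KG K G) X] (ψ : M →ₗ[K] X),
        (∀ g : G, ∀ m ∈ D g⁻¹, ψ (θ g m) = MonoidAlgebra.of K G g • ψ m) →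
        ∃! ψ' : GlobPA K D θ →ₗ[KG K G] X, ∀ m : M, ψ' (ι m) = ψ m := by
  intro ι
  obtain ⟨hD1, hθ1, hmem, hinv, hsurj, hmix, hcomp⟩ := hα
  constructor
  · intro g m hm
    have hrel : ((1 : KG K G) ⊗ₜ[K] θ g m - MonoidAlgebra.of K G g ⊗ₜ[K] m)
        ∈ globRel K D θ := by
      apply Submodule.subset_span
      exact ⟨1, g, m, hm, by simp [MonoidAlgebra.of_apply, MonoidAlgebra.one_def]⟩
    have h2 : MonoidAlgebra.of K G g • ((1 : KG K G) ⊗ₜ[K] m)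
        = MonoidAlgebra.of K G g ⊗ₜ[K] m := by
      rw [TensorProduct.smul_tmul', smul_eq_mul, mul_one]
    show Submodule.Quotient.mk _ = MonoidAlgebra.of K G g • Submodule.Quotient.mk _
    rw [← Submodule.Quotient.mk_smul, h2]
    exact (Submodule.Quotient.eq _).2 hrel
  · intro X _ _ _ _ ψ hψ
    let b : KG K G →ₗ[K] M →ₗ[K] X :=
      { toFun := fun a =>
          { toFun := fun m => a • ψ m
            map_add' := fun x y => by simp only [map_add, smul_add]
            map_smul' := fun c x => by simp only [map_smul, RingHom.id_apply]; rw [smul_comm] }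
        map_add' := fun a₁ a₂ => by ext m; exact add_smul a₁ a₂ (ψ m)
        map_smul' := fun c a => by ext m; exact smul_assoc c a (ψ m) }
    let f0 : KG K G ⊗[K] M →ₗ[K] X := TensorProduct.lift b
    have hf0 : ∀ (a : KG K G) (m : M), f0 (a ⊗ₜ[K] m) = a • ψ m := fun a m => rfl
    have hsmul : ∀ (a : KG K G) (x : KG K G ⊗[K] M), f0 (a • x) = a • f0 x := by
      intro a x
      induction x using TensorProduct.induction_on with
      | zero => simp
      | tmul c m =>
          rw [TensorProduct.smul_tmul', hf0, hf0, smul_eq_mul, mul_smul]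
      | add x y hx hy => rw [smul_add, map_add, map_add, hx, hy, smul_add]
    let f : KG K G ⊗[K] M →ₗ[KG K G] X :=
      { toFun := f0
        map_add' := f0.map_add
        map_smul' := hsmul }
    have hfapp : ∀ (a : KG K G) (m : M), f (a ⊗ₜ[K] m) = a • ψ m := fun a m => rfl
    have hker : globRel K D θ ≤ LinearMap.ker f := by
      rw [globRel, Submodule.span_le]
      rintro w ⟨g, h, m, hm, rfl⟩
      simp only [SetLike.mem_coe, LinearMap.mem_ker, map_sub, hfapp,
        hψ h m hm, smul_smul, ← map_mul, sub_self]
    set ψ' : GlobPA K D θ →ₗ[KG K G] X := (globRel K D θ).liftQ f hker with hψ'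
    have key : ∀ m : M, ψ' (ι m) = ψ m := by
      intro m
      show f ((1 : KG K G) ⊗ₜ[K] m) = ψ m
      rw [hfapp, one_smul]
    refine ⟨ψ', key, ?_⟩
    intro χ hχ
    apply LinearMap.ext
    intro x
    obtain ⟨y, rfl⟩ := Submodule.Quotient.mk_surjective _ x
    induction y using TensorProduct.induction_on with
    | zero => simp
    | tmul a m =>
        have hmk : (Submodule.Quotient.mk (a ⊗ₜ[K] m) : GlobPA K D θ) = a • ι m := by
          show _ = a • Submodule.Quotient.mk _
          rw [← Submodule.Quotient.mk_smul, TensorProduct.smul_tmul', smul_eq_mul, mul_one]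
        rw [hmk, map_smul, map_smul, hχ m, key m]
    | add x y hx hy =>
        rw [Submodule.Quotient.mk_add, map_add, map_add, hx, hy]
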